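/- For any collection 𝒞 and finite noise level i ≥ 1, 𝒞 is uniformly generatable with noise level i if and only if 𝒞 is uniformly generatable with noise level 1. -/

import Mathlib

open Set Classical

/-- The set of languages in `𝒞` consistent with sample `S` at noise level `i`. -/
def Consistent {U : Type*} (𝒞 : Set (Set U)) (S : Set U) (i : ℕ) : Set (Set U) :=
  {L | L ∈ 𝒞 ∧ (S \ L).encard ≤ (i : ℕ∞)}

/-- The noisy closure of `S` at noise level `i`. -/
noncomputable def NoisyClosure {U : Type*} (𝒞 : Set (Set U)) (S : Set U) (i : ℕ) : Set U :=
  if (Consistent 𝒞 S i).Nonempty then ⋂ L ∈ Consistent 𝒞 S i, L else ∅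

/-- The noisy closure dimension of `𝒞` at noise level `i`, as an extended natural. -/
noncomputable def NC {U : Type*} (𝒞 : Set (Set U)) (i : ℕ) : ℕ∞ :=
  ⨆ S ∈ {S : Set U | S.Finite ∧ (Consistent 𝒞 S i).Nonempty ∧
      (NoisyClosure 𝒞 S i).Finite}, S.encard

/-- `x` is an enumeration of `K` with noise level at most `i`. -/
def IsNoisyEnum {U : Type*} (K : Set U) (i : ℕ) (x : ℕ → U) : Prop :=
  Function.Injective x ∧ K ⊆ Set.range x ∧ (Set.range x \ K).encard ≤ (i : ℕ∞)

/-- The set of strings revealed up to and including time `t`. -/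
def seenSet {U : Type*} (x : ℕ → U) (t : ℕ) : Set U := x '' Set.Iic t

/-- The prefix `x₀, …, x_t` of the enumeration, as a list fed to the generator. -/
def prefixList {U : Type*} (x : ℕ → U) (t : ℕ) : List U := (List.range (t + 1)).map x

/-- `G` uniformly generates with noise level `i` for `𝒞`. -/
def UniformGen {U : Type*} (𝒞 : Set (Set U)) (i : ℕ) (G : List U → U) : Prop :=
  ∃ t0 : ℕ, ∀ K ∈ 𝒞, ∀ x : ℕ → U, IsNoisyEnum K i x →
    ∀ t ≥ t0, G (prefixList x t) ∈ K \ seenSet x t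

/-- `G` non-uniformly generates with noise level `i` for `𝒞`. -/
def NonUniformGen {U : Type*} (𝒞 : Set (Set U)) (i : ℕ) (G : List U → U) : Prop :=
  ∀ K ∈ 𝒞, ∃ t0 : ℕ, ∀ x : ℕ → U, IsNoisyEnum K i x →
    ∀ t ≥ t0, G (prefixList x t) ∈ K \ seenSet x t

/-- `G` uniformly noise-dependently generates for `𝒞`. -/
def UniformNoiseDepGen {U : Type*} (𝒞 : Set (Set U)) (G : List U → U) : Prop :=
  ∀ n : ℕ, ∃ t0 : ℕ, ∀ K ∈ 𝒞, ∀ x : ℕ → U, IsNoisyEnum K n x →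
    ∀ t ≥ t0, G (prefixList x t) ∈ K \ seenSet x t

/-- `G` non-uniformly noise-dependently generates for `𝒞`. -/
def NonUniformNoiseDepGen {U : Type*} (𝒞 : Set (Set U)) (G : List U → U) : Prop :=
  ∀ n : ℕ, ∀ K ∈ 𝒞, ∃ t0 : ℕ, ∀ x : ℕ → U, IsNoisyEnum K n x →
    ∀ t ≥ t0, G (prefixList x t) ∈ K \ seenSet x t

/-- The infinite "column" `B c` in the universe `ℕ × ℕ`. -/
def column (c : ℕ) : Set (ℕ × ℕ) := {p | p.1 = c}

/-- The collection of all nonempty unions of columns. -/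
def columnCollection : Set (Set (ℕ × ℕ)) :=
  {L | ∃ x : Set ℕ, x.Nonempty ∧ L = ⋃ c ∈ x, column c}

section Basic
variable {U : Type*} {𝒞 : Set (Set U)} {S S' : Set U} {i j : ℕ} {L : Set U}

lemma consistent_antitone (h : S ⊆ S') : Consistent 𝒞 S' i ⊆ Consistent 𝒞 S i := by
  rintro L ⟨hL, he⟩
  exact ⟨hL, le_trans (Set.encard_le_encard (diff_subset_diff_left h)) he⟩

lemma consistent_mono (h : i ≤ j) : Consistent 𝒞 S i ⊆ Consistent 𝒞 S j := by
  rintro L ⟨hL, he⟩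
  exact ⟨hL, he.trans (by exact_mod_cast h)⟩

lemma closure_subset (hL : L ∈ Consistent 𝒞 S i) : NoisyClosure 𝒞 S i ⊆ L := by
  rw [NoisyClosure, if_pos ⟨L, hL⟩]
  exact biInter_subset_of_mem hL

lemma mem_closure_of (hne : (Consistent 𝒞 S i).Nonempty) {z : U}
    (hz : ∀ L ∈ Consistent 𝒞 S i, z ∈ L) : z ∈ NoisyClosure 𝒞 S i := by
  rw [NoisyClosure, if_pos hne]
  exact mem_biInter hz

lemma encard_le_NC (h1 : S.Finite) (h2 : (Consistent 𝒞 S i).Nonempty)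
    (h3 : (NoisyClosure 𝒞 S i).Finite) : S.encard ≤ NC 𝒞 i :=
  le_biSup _ ⟨h1, h2, h3⟩

lemma NC_le {c : ℕ∞} (h : ∀ S : Set U, S.Finite → (Consistent 𝒞 S i).Nonempty →
    (NoisyClosure 𝒞 S i).Finite → S.encard ≤ c) : NC 𝒞 i ≤ c :=
  iSup₂_le fun S hS => h S hS.1 hS.2.1 hS.2.2

lemma mem_prefixList_iff {x : ℕ → U} {t : ℕ} {a : U} :
    a ∈ prefixList x t ↔ a ∈ seenSet x t := by
  simp [prefixList, seenSet, Set.mem_image, Nat.lt_succ_iff, Set.mem_Iic, eq_comm]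

lemma seenSet_finite (x : ℕ → U) (t : ℕ) : (seenSet x t).Finite :=
  (Set.finite_Iic t).image x

lemma seenSet_encard {x : ℕ → U} (hx : Function.Injective x) (t : ℕ) :
    (seenSet x t).encard = t + 1 := by
  rw [seenSet, Set.InjOn.encard_image (hx.injOn)]
  rw [show Set.Iic t = ↑(Finset.Iic t) by simp]
  rw [Set.encard_coe_eq_coe_finsetCard]
  simp

end Basic

/-- Sufficiency: finite NC gives a uniform generator. -/
lemma exists_gen_of_NC_ne_top {U : Type*} [Nonempty U] {𝒞 : Set (Set U)} {i : ℕ}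
    (hNC : NC 𝒞 i ≠ ⊤) : ∃ G : List U → U, UniformGen 𝒞 i G := by
  classical
  set d : ℕ := (NC 𝒞 i).toNat with hd
  refine ⟨fun l => if h : ((NoisyClosure 𝒞 {a | a ∈ l} i) \ {a | a ∈ l}).Nonempty
      then h.choose else Classical.arbitrary U, d, ?_⟩
  intro K hK x hx t ht
  have hset : {a | a ∈ prefixList x t} = seenSet x t := by
    ext a; exact mem_prefixList_iff
  have hfin : (seenSet x t).Finite := seenSet_finite x t
  have hKcons : K ∈ Consistent 𝒞 (seenSet x t) i := by
    refine ⟨hK, le_trans (Set.encard_le_encard ?_) hx.2.2⟩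
    exact diff_subset_diff_left (by rintro a ⟨n, _, rfl⟩; exact ⟨n, rfl⟩)
  have hne : (Consistent 𝒞 (seenSet x t) i).Nonempty := ⟨K, hKcons⟩
  have hclinf : (NoisyClosure 𝒞 (seenSet x t) i).Infinite := by
    intro hclfin
    have hle : (seenSet x t).encard ≤ NC 𝒞 i := encard_le_NC hfin hne hclfin
    rw [seenSet_encard hx.1] at hle
    have : NC 𝒞 i ≤ (d : ℕ∞) := le_of_eq (ENat.coe_toNat hNC).symm
    have h2 : ((t : ℕ∞) + 1) ≤ (d : ℕ∞) := hle.trans this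
    have : t + 1 ≤ d := by exact_mod_cast h2
    omega
  have hdiff : ((NoisyClosure 𝒞 (seenSet x t) i) \ (seenSet x t)).Nonempty :=
    Set.Infinite.nonempty (hclinf.diff hfin)
  simp only []
  rw [show {a | a ∈ prefixList x t} = seenSet x t from hset]
  rw [dif_pos hdiff]
  obtain ⟨hzin, hzout⟩ := hdiff.choose_spec
  exact ⟨closure_subset hKcons hzin, hzout⟩

/-- Step: if NC at level n is at most k, NC at level n+1 is at most 2k+1. -/
lemma NC_step {U : Type*} {𝒞 : Set (Set U)} {n k : ℕ} (hn : 1 ≤ n)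
    (h : NC 𝒞 n ≤ (k : ℕ∞)) : NC 𝒞 (n + 1) ≤ ((2 * k + 1 : ℕ) : ℕ∞) := by
  classical
  apply NC_le
  intro S hSfin hScons hSclfin
  rcases S.eq_empty_or_nonempty with rfl | hSne
  · simp
  set Cl : U → Set U := fun u => NoisyClosure 𝒞 (S \ {u}) n with hCl
  set Uset : Set U := {u | u ∈ S ∧ (Consistent 𝒞 (S \ {u}) n).Nonempty} with hUset
  have hUS : Uset ⊆ S := fun u hu => hu.1
  -- Key 1 : every (n+1)-consistent language is n-consistent for some punctured sample
  have key1 : ∀ L ∈ Consistent 𝒞 S (n + 1), ∃ u ∈ Uset, L ∈ Consistent 𝒞 (S \ {u}) n := by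
    rintro L ⟨hL𝒞, he⟩
    rcases (S \ L).eq_empty_or_nonempty with hSL | ⟨u, hu⟩
    · obtain ⟨u, hu⟩ := hSne
      have hcons : L ∈ Consistent 𝒞 (S \ {u}) n := by
        refine ⟨hL𝒞, ?_⟩
        have hsub : (S \ {u}) \ L ⊆ S \ L := diff_subset_diff_left diff_subset
        rw [hSL, Set.subset_empty_iff] at hsub
        simp [hsub]
      exact ⟨u, ⟨hu, ⟨L, hcons⟩⟩, hcons⟩
    · have hueq : (S \ {u}) \ L = (S \ L) \ {u} := by
        ext z; simp only [mem_diff, mem_singleton_iff]; tauto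
      have hcons : L ∈ Consistent 𝒞 (S \ {u}) n := by
        refine ⟨hL𝒞, ?_⟩
        rw [hueq]
        have h1 : ((S \ L) \ {u}).encard + 1 = (S \ L).encard :=
          Set.encard_diff_singleton_add_one hu
        have h2 : ((S \ L) \ {u}).encard + 1 ≤ (n : ℕ∞) + 1 := by
          rw [h1]; exact he.trans_eq (by push_cast; ring)
        exact (WithTop.add_le_add_iff_right (by simp : (1:ℕ∞) ≠ ⊤)).mp h2
      exact ⟨u, ⟨hu.1, ⟨L, hcons⟩⟩, hcons⟩
  -- Key 3 : the intersection of punctured closures over Uset is finite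
  have key3 : (⋂ u ∈ Uset, Cl u) ⊆ NoisyClosure 𝒞 S (n + 1) := by
    intro z hz
    refine mem_closure_of hScons fun L hL => ?_
    obtain ⟨u, huU, hLu⟩ := key1 L hL
    exact closure_subset hLu (by exact (Set.mem_iInter₂.mp hz) u huU)
  have hUne : Uset.Nonempty := by
    obtain ⟨L, hL⟩ := hScons
    obtain ⟨u, huU, _⟩ := key1 L hL
    exact ⟨u, huU⟩
  -- choose a minimal nonempty V ⊆ Uset with finite intersection of closures
  set 𝒱 : Set (Set U) := {V | V ⊆ Uset ∧ V.Nonempty ∧ (⋂ u ∈ V, Cl u).Finite} with h𝒱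
  have hU𝒱 : Uset ∈ 𝒱 := ⟨Set.Subset.rfl, hUne, hSclfin.subset key3⟩
  set cset : Set ℕ := {m | ∃ V ∈ 𝒱, V.ncard = m} with hcset
  have hcne : cset.Nonempty := ⟨Uset.ncard, Uset, hU𝒱, rfl⟩
  obtain ⟨V, hV𝒱, hVcard⟩ := Nat.sInf_mem hcne
  set r : ℕ := sInf cset with hr
  have hVfin : V.Finite := hSfin.subset (hV𝒱.1.trans hUS)
  have hVS : V ⊆ S := hV𝒱.1.trans hUS
  have hmin : ∀ V' : Set U, V' ⊆ Uset → V'.Nonempty → (⋂ u ∈ V', Cl u).Finite →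
      r ≤ V'.ncard := fun V' h1 h2 h3 => Nat.sInf_le ⟨V', ⟨h1, h2, h3⟩, rfl⟩
  -- generic closure bound: any T whose consistent family contains all punctured ones over V
  have clbound : ∀ T : Set U, (∀ u ∈ V, Consistent 𝒞 (S \ {u}) n ⊆ Consistent 𝒞 T n) →
      (NoisyClosure 𝒞 T n).Finite := by
    intro T hT
    have hsub : NoisyClosure 𝒞 T n ⊆ ⋂ u ∈ V, Cl u := by
      intro z hz
      refine Set.mem_iInter₂.mpr fun u hu => ?_
      refine mem_closure_of ((hV𝒱.1 hu).2) fun L hL => ?_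
      exact closure_subset (hT u hu hL) hz
    exact hV𝒱.2.2.subset hsub
  -- T₁ = S \ V is a level-n witness
  have hT1cons : ∀ u ∈ V, Consistent 𝒞 (S \ {u}) n ⊆ Consistent 𝒞 (S \ V) n := by
    intro u hu
    exact consistent_antitone (diff_subset_diff_right (by simp [Set.singleton_subset_iff, hu]))
  have hT1 : (S \ V).encard ≤ (k : ℕ∞) := by
    obtain ⟨u₀, hu₀⟩ := hV𝒱.2.1
    refine le_trans (encard_le_NC (hSfin.diff) ?_ (clbound _ hT1cons)) h
    obtain ⟨L, hL⟩ := (hV𝒱.1 hu₀).2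
    exact ⟨L, hT1cons u₀ hu₀ hL⟩
  -- bound on V
  have hVbound : V.encard ≤ (k : ℕ∞) + 1 := by
    rcases Nat.lt_or_ge r 2 with hr2 | hr2
    · -- r = 1
      have : V.encard = (V.ncard : ℕ∞) := by
        rw [Set.ncard_def]
        exact (ENat.coe_toNat hVfin.encard_lt_top.ne).symm
      rw [this, hVcard]
      have : r ≤ 1 := by omega
      calc ((r:ℕ∞)) ≤ 1 := by exact_mod_cast this
        _ ≤ (k:ℕ∞) + 1 := le_add_self
    · -- r ≥ 2 : build the witness T₂ from fresh elements
      have hVne2 : ∀ u ∈ V, (V \ {u}).Nonempty := by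
        intro u hu
        rw [Set.nonempty_iff_ne_empty]
        intro hemp
        have : V ⊆ {u} := by
          intro v hv
          by_contra hvu
          exact absurd (Set.mem_diff_of_mem hv hvu) (by rw [hemp]; simp)
        have : V.ncard ≤ 1 := le_trans (Set.ncard_le_ncard this (Set.finite_singleton u))
          (by simp)
        omega
      have hinf : ∀ u ∈ V, (⋂ u' ∈ (V \ {u}), Cl u').Infinite := by
        intro u hu
        by_contra hfin
        rw [Set.not_infinite] at hfin
        have hle := hmin (V \ {u}) ((diff_subset).trans hV𝒱.1) (hVne2 u hu) hfin
        have hlt : (V \ {u}).ncard < V.ncard := Set.ncard_diff_singleton_lt_of_mem hu hVfin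
        omega
      have hex : ∀ u ∈ V, ∃ z, z ∈ (⋂ u' ∈ (V \ {u}), Cl u') ∧ z ∉ ⋂ u' ∈ V, Cl u' := by
        intro u hu
        obtain ⟨z, hz⟩ := ((hinf u hu).diff hV𝒱.2.2).nonempty
        exact ⟨z, hz.1, hz.2⟩
      choose! w hw1 hw2 using hex
      have hwmem : ∀ u ∈ V, ∀ u' ∈ V, u' ≠ u → w u ∈ Cl u' := by
        intro u hu u' hu' hne
        exact Set.mem_iInter₂.mp (hw1 u hu) u' ⟨hu', hne⟩
      have hwinj : Set.InjOn w V := by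
        intro u hu u' hu' heq
        by_contra hne
        apply hw2 u hu
        refine Set.mem_iInter₂.mpr fun v hv => ?_
        rcases eq_or_ne v u with rfl | hvu
        · rw [heq]; exact hwmem u' hu' v hv hne
        · exact hwmem u hu v hv hvu
      set T₂ : Set U := w '' V with hT₂
      have hT2cons : ∀ u ∈ V, Consistent 𝒞 (S \ {u}) n ⊆ Consistent 𝒞 T₂ n := by
        rintro u hu L hL
        refine ⟨hL.1, ?_⟩
        have hsub : T₂ \ L ⊆ {w u} := by
          rintro z ⟨⟨u', hu', rfl⟩, hzL⟩
          rcases eq_or_ne u' u with rfl | hne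
          · rfl
          · exact absurd (closure_subset hL (hwmem u' hu' u hu hne.symm)) hzL
        calc (T₂ \ L).encard ≤ ({w u} : Set U).encard := Set.encard_le_encard hsub
          _ = 1 := Set.encard_singleton _
          _ ≤ (n : ℕ∞) := by exact_mod_cast hn
      have hT2ne : (Consistent 𝒞 T₂ n).Nonempty := by
        obtain ⟨u₀, hu₀⟩ := hV𝒱.2.1
        obtain ⟨L, hL⟩ := (hV𝒱.1 hu₀).2
        exact ⟨L, hT2cons u₀ hu₀ hL⟩
      have hT2fin : T₂.Finite := hVfin.image w
      have hT2enc : T₂.encard = V.encard := Set.InjOn.encard_image hwinj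
      have : V.encard ≤ (k : ℕ∞) := by
        rw [← hT2enc]
        exact le_trans (encard_le_NC hT2fin hT2ne (clbound _ hT2cons)) h
      exact this.trans (by simp)
  -- combine
  have hsplit : (S \ V).encard + V.encard = S.encard :=
    Set.encard_diff_add_encard_of_subset hVS
  calc S.encard = (S \ V).encard + V.encard := hsplit.symm
    _ ≤ (k : ℕ∞) + ((k : ℕ∞) + 1) := add_le_add hT1 hVbound
    _ = ((2 * k + 1 : ℕ) : ℕ∞) := by push_cast; ring

lemma NC_one_le_of_uniformGen {U : Type*} [Countable U] {𝒞 : Set (Set U)}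
    (h𝒞 : ∀ L ∈ 𝒞, L.Infinite) {G : List U → U} {t0 : ℕ}
    (hG : ∀ K ∈ 𝒞, ∀ x : ℕ → U, IsNoisyEnum K 1 x →
      ∀ t ≥ t0, G (prefixList x t) ∈ K \ seenSet x t) :
    NC 𝒞 1 ≤ (t0 : ℕ∞) := by
  classical
  apply NC_le
  intro S hSfin hScons hSclfin
  by_contra hgt
  push_neg at hgt
  set m : ℕ := S.ncard with hm
  have hSenc : S.encard = (m : ℕ∞) := by
    rw [hm, Set.ncard_def]; exact (ENat.coe_toNat hSfin.encard_lt_top.ne).symm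
  have hmt0 : t0 + 1 ≤ m := by
    rw [hSenc] at hgt
    have : (t0 : ℕ∞) < (m : ℕ∞) := hgt
    exact_mod_cast this
  set lS : List U := hSfin.toFinset.toList with hlS
  have hlSnodup : lS.Nodup := Finset.nodup_toList _
  have hlSlen : lS.length = m := by
    rw [hlS, Finset.length_toList, hm, Set.ncard_eq_toFinset_card S hSfin]
  have hlSmem : ∀ a, a ∈ lS ↔ a ∈ S := by
    intro a; rw [hlS, Finset.mem_toList, Set.Finite.mem_toFinset]
  set P : ℕ → List U := fun j => Nat.rec lS (fun _ ih => ih ++ [G ih]) j with hP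
  have hP0 : P 0 = lS := rfl
  have hPsucc : ∀ j, P (j + 1) = P j ++ [G (P j)] := fun j => rfl
  set v : ℕ → U := fun j => G (P j) with hv
  have hPlen : ∀ j, (P j).length = m + j := by
    intro j; induction j with
    | zero => simpa [hP0] using hlSlen
    | succ j ih => rw [hPsucc, List.length_append, ih]; simp only [List.length_singleton]; omega
  have hPmem : ∀ j a, a ∈ P j ↔ a ∈ S ∨ ∃ i < j, v i = a := by
    intro j; induction j with
    | zero => intro a; simp [hP0, hlSmem a]
    | succ j ih =>
      intro a
      rw [hPsucc, List.mem_append, ih a, List.mem_singleton]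
      constructor
      · rintro ((h | ⟨i, hi, rfl⟩) | rfl)
        · exact Or.inl h
        · exact Or.inr ⟨i, by omega, rfl⟩
        · exact Or.inr ⟨j, by omega, rfl⟩
      · rintro (h | ⟨i, hi, rfl⟩)
        · exact Or.inl (Or.inl h)
        · rcases Nat.lt_succ_iff_lt_or_eq.mp hi with hi' | rfl
          · exact Or.inl (Or.inr ⟨i, hi', rfl⟩)
          · exact Or.inr rfl
  set C : Set U := NoisyClosure 𝒞 S 1 with hC
  have nodupAux : ∀ j, (∀ i, i < j → v i ∉ P i) → (P j).Nodup := by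
    intro j; induction j with
    | zero => intro _; simpa [hP0] using hlSnodup
    | succ j ihj =>
      intro hh
      rw [hPsucc]
      rw [List.nodup_append]
      refine ⟨ihj fun i hi => hh i (by omega), List.nodup_singleton _, ?_⟩
      intro a ha b hb hab
      rw [List.mem_singleton] at hb
      subst hb; subst hab
      exact hh j (by omega) ha
  have main : ∀ j, v j ∈ C ∧ v j ∉ P j := by
    intro j
    induction j using Nat.strong_induction_on with
    | _ j ih =>
    have hnodup : (P j).Nodup := nodupAux j fun i hi => (ih i hi).2
    by_contra hQ
    have hLex : ∃ L, L ∈ Consistent 𝒞 S 1 ∧ (v j ∉ C → v j ∉ L) := by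
      by_cases hvC : v j ∈ C
      · obtain ⟨L, hL⟩ := hScons
        exact ⟨L, hL, fun h => absurd hvC h⟩
      · have hvC' : v j ∉ ⋂ L ∈ Consistent 𝒞 S 1, L := by
          rw [hC, NoisyClosure, if_pos hScons] at hvC
          exact hvC
        simp only [Set.mem_iInter, not_forall] at hvC'
        obtain ⟨L, hL, hvL⟩ := hvC'
        exact ⟨L, hL, fun _ => hvL⟩
    obtain ⟨L, hLcons, hLv⟩ := hLex
    have hLinf := h𝒞 L hLcons.1
    have hCsub : C ⊆ L := closure_subset hLcons
    have hPjC : ∀ a ∈ P j, a ∈ S ∨ a ∈ C := by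
      intro a ha
      rcases (hPmem j a).mp ha with h | ⟨i, hi, rfl⟩
      · exact Or.inl h
      · exact Or.inr (ih i hi).1
    set Pset : Set U := {a | a ∈ P j} with hPset
    have hPsetfin : Pset.Finite := (P j).finite_toSet
    set A : Set U := L \ Pset with hA
    have hAinf : A.Infinite := hLinf.diff hPsetfin
    haveI : Infinite A := hAinf.to_subtype
    obtain ⟨den⟩ := nonempty_denumerable (↥A)
    set e : ℕ ≃ A := (@Denumerable.eqv A den).symm with he
    set x : ℕ → U := fun nn =>
      if h : nn < m + j then (P j).get ⟨nn, by rw [hPlen j]; exact h⟩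
      else (e (nn - (m + j)) : U) with hx
    have hxlt : ∀ nn (h : nn < m + j), x nn = (P j).get ⟨nn, by rw [hPlen j]; exact h⟩ := by
      intro nn h; rw [hx]; exact dif_pos h
    have hxge : ∀ nn, ¬ nn < m + j → x nn = (e (nn - (m + j)) : U) := by
      intro nn h; rw [hx]; exact dif_neg h
    have hgetPset : ∀ (idx : Fin (P j).length), (P j).get idx ∈ Pset := fun idx =>
      List.get_mem (P j) idx
    have heA : ∀ q : ℕ, ((e q : U) ∈ L ∧ (e q : U) ∉ Pset) := fun q => (e q).2
    have hxinj : Function.Injective x := by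
      intro a b heq
      by_cases ha : a < m + j <;> by_cases hb : b < m + j
      · rw [hxlt a ha, hxlt b hb] at heq
        have := (List.Nodup.get_inj_iff hnodup).mp heq
        exact congrArg Fin.val this
      · rw [hxlt a ha, hxge b hb] at heq
        exact absurd (by rw [← heq]; exact hgetPset _) (heA (b - (m + j))).2
      · rw [hxge a ha, hxlt b hb] at heq
        exact absurd (by rw [heq]; exact hgetPset _) (heA (a - (m + j))).2
      · rw [hxge a ha, hxge b hb] at heq
        have := e.injective (Subtype.coe_injective heq)
        omega
    have hrange : Set.range x = Pset ∪ A := by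
      ext z
      constructor
      · rintro ⟨nn, rfl⟩
        by_cases h : nn < m + j
        · rw [hxlt nn h]; exact Or.inl (hgetPset _)
        · rw [hxge nn h]; exact Or.inr (e (nn - (m + j))).2
      · rintro (hz | hz)
        · obtain ⟨idx, hidx⟩ := List.mem_iff_get.mp hz
          have hlt : (idx : ℕ) < m + j := by rw [← hPlen j]; exact idx.2
          refine ⟨idx, ?_⟩
          rw [hxlt _ hlt]
          exact hidx
        · refine ⟨(m + j) + e.symm ⟨z, hz⟩, ?_⟩
          rw [hxge _ (by omega)]
          simp
    have henum : IsNoisyEnum L 1 x := by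
      refine ⟨hxinj, ?_, ?_⟩
      · intro z hz
        rw [hrange]
        by_cases h : z ∈ Pset
        · exact Or.inl h
        · exact Or.inr ⟨hz, h⟩
      · have hsub : Set.range x \ L ⊆ S \ L := by
          rintro z ⟨hz, hzL⟩
          rw [hrange] at hz
          rcases hz with hz | hz
          · rcases hPjC z hz with h | h
            · exact ⟨h, hzL⟩
            · exact absurd (hCsub h) hzL
          · exact absurd hz.1 hzL
        exact le_trans (Set.encard_le_encard hsub) hLcons.2
    set t : ℕ := (m - 1) + j with ht
    have ht0 : t ≥ t0 := by omega
    have ht1 : t + 1 = m + j := by omega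
    have hpre : prefixList x t = P j := by
      apply List.ext_getElem
      · simp [prefixList, hPlen, ht1]
      · intro nn h1 h2
        have hnn : nn < m + j := by rw [← hPlen j]; exact h2
        simp only [prefixList, List.getElem_map, List.getElem_range]
        rw [hxlt nn hnn]
        simp [List.get_eq_getElem]
    have hseen : seenSet x t = Pset := by
      ext z
      constructor
      · rintro ⟨nn, hnn, rfl⟩
        rw [Set.mem_Iic] at hnn
        have : nn < m + j := by omega
        rw [hxlt nn this]
        exact hgetPset _
      · intro hz
        obtain ⟨idx, hidx⟩ := List.mem_iff_get.mp hz
        have hlt : (idx : ℕ) < m + j := by rw [← hPlen j]; exact idx.2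
        refine ⟨idx, by rw [Set.mem_Iic]; omega, ?_⟩
        rw [hxlt _ hlt]
        exact hidx
    have hcontr := hG L hLcons.1 x henum t ht0
    rw [hpre, hseen] at hcontr
    by_cases hvC : v j ∈ C
    · have : v j ∈ P j := by
        by_contra hnP
        exact hQ ⟨hvC, hnP⟩
      exact hcontr.2 this
    · exact (hLv hvC) hcontr.1
  have hvinj : Function.Injective v := by
    intro a b heq
    by_contra hne
    rcases Nat.lt_or_ge a b with hab | hab
    · exact (main b).2 ((hPmem b (v b)).mpr (Or.inr ⟨a, hab, heq⟩))
    · have hba : b < a := by omega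
      exact (main a).2 ((hPmem a (v a)).mpr (Or.inr ⟨b, hba, heq.symm⟩))
  exact (Set.infinite_of_injective_forall_mem hvinj fun j => (main j).1) hSclfin


theorem stmt10 {U : Type*} [Countable U] (𝒞 : Set (Set U))
    (h𝒞 : ∀ L ∈ 𝒞, L.Infinite) (i : ℕ) (hi : 1 ≤ i) :
    (∃ G : List U → U, UniformGen 𝒞 i G) ↔
    (∃ G : List U → U, UniformGen 𝒞 1 G) := by
  constructor
  · rintro ⟨G, t0, hG⟩
    exact ⟨G, t0, fun K hK x hx t ht => hG K hK x
      ⟨hx.1, hx.2.1, hx.2.2.trans (by exact_mod_cast hi)⟩ t ht⟩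
  · rintro ⟨G, t0, hG⟩
    haveI : Nonempty U := ⟨G []⟩
    have h1 : NC 𝒞 1 ≤ (t0 : ℕ∞) := NC_one_le_of_uniformGen h𝒞 hG
    have hfin : ∀ j : ℕ, ∃ k : ℕ, NC 𝒞 (j + 1) ≤ (k : ℕ∞) := by
      intro j; induction j with
      | zero => exact ⟨t0, h1⟩
      | succ j ih =>
        obtain ⟨k, hk⟩ := ih
        exact ⟨2 * k + 1, NC_step (by omega) hk⟩
    obtain ⟨k, hk⟩ := hfin (i - 1)
    have hne : NC 𝒞 i ≠ ⊤ := by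
      have hle : NC 𝒞 i ≤ (k : ℕ∞) := by
        rw [show i = (i - 1) + 1 by omega]; exact hk
      exact ne_top_of_le_ne_top (ENat.coe_ne_top k) hle
    exact exists_gen_of_NC_ne_top hne
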